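/- For any word w in D_n, the word Phi(w) := reverse(u) reverse(v), where w = uv and u is the longest prefix of w attaining the maximal value of delta among all prefixes, is again in D_n, and Phi is an involution: Phi(Phi(w)) = w. -/

import Mathlib

/-- Number of occurrences of the letter `a` (encoded `true`). -/
def countA (w : List Bool) : ℕ := (w.filter (fun x => x = true)).length

/-- Number of occurrences of the letter `b` (encoded `false`). -/
def countB (w : List Bool) : ℕ := (w.filter (fun x => x = false)).length

/-- `delta w = |w|_a - |w|_b`. -/
def delta (w : List Bool) : ℤ := (countA w : ℤ) - (countB w : ℤ)

/-- `D_n`: words with `n-1` a's, `n` b's, every strict prefix with `delta ≥ 0`. -/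
def inDn (n : ℕ) (w : List Bool) : Prop :=
  countA w = n - 1 ∧ countB w = n ∧
    ∀ u v : List Bool, w = u ++ v → v ≠ [] → 0 ≤ delta u

lemma countA_append (x y : List Bool) : countA (x ++ y) = countA x + countA y := by
  simp [countA, List.filter_append]

lemma countB_append (x y : List Bool) : countB (x ++ y) = countB x + countB y := by
  simp [countB, List.filter_append]

lemma countA_reverse (x : List Bool) : countA x.reverse = countA x := by
  simp [countA, List.filter_reverse]

lemma countB_reverse (x : List Bool) : countB x.reverse = countB x := by
  simp [countB, List.filter_reverse]

lemma delta_append (x y : List Bool) : delta (x ++ y) = delta x + delta y := by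
  simp [delta, countA_append, countB_append]; ring

lemma delta_reverse (x : List Bool) : delta x.reverse = delta x := by
  simp [delta, countA_reverse, countB_reverse]

lemma delta_nil : delta ([] : List Bool) = 0 := rfl

lemma count_sum (w : List Bool) : countA w + countB w = w.length := by
  induction w with
  | nil => rfl
  | cons h t ih =>
    cases h <;> simp [countA, countB, List.filter_cons] at * <;> omega

theorem stmt16 (n : ℕ) (w u v : List Bool) (hw : w = u ++ v) (hin : inDn n w)
    (hmax : ∀ u' v' : List Bool, w = u' ++ v' →
      delta u' ≤ delta u ∧ (delta u' = delta u → u'.length ≤ u.length)) :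
    inDn n (u.reverse ++ v.reverse) ∧
      ∀ u2 v2 : List Bool, u.reverse ++ v.reverse = u2 ++ v2 →
        (∀ u' v' : List Bool, u.reverse ++ v.reverse = u' ++ v' →
          delta u' ≤ delta u2 ∧ (delta u' = delta u2 → u'.length ≤ u2.length)) →
        u2.reverse ++ v2.reverse = w := by
  rcases n with _ | m
  · -- n = 0 : the word is empty
    have hlen : w.length = 0 := by
      have h1 := hin.1
      have h2 := hin.2.1
      have h3 := count_sum w
      omega
    have hw0 : w = [] := List.length_eq_zero_iff.mp hlen
    have huv : u = [] ∧ v = [] := List.append_eq_nil_iff.mp (hw0 ▸ hw.symm)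
    obtain ⟨hu, hv⟩ := huv
    subst hu; subst hv
    constructor
    · simpa [hw0] using hin
    · intro u2 v2 heq _
      have := List.append_eq_nil_iff.mp heq.symm
      simp [this.1, this.2, hw0]
  · -- n = m + 1
    have hA : countA w = m := by simpa using hin.1
    have hB : countB w = m + 1 := hin.2.1
    have hdw : delta w = -1 := by
      simp [delta, hA, hB]
    have hM0 : (0 : ℤ) ≤ delta u := by
      have := (hmax [] w (by simp)).1
      simpa [delta_nil] using this
    have hstrict : ∀ p r : List Bool, w = p ++ r → r ≠ [] → 0 ≤ delta p := hin.2.2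
    -- any nonempty word following u inside w has delta ≤ -1
    have hprefix : ∀ t r : List Bool, w = u ++ (t ++ r) → t ≠ [] → delta t ≤ -1 := by
      intro t r h ht
      have h1 := hmax (u ++ t) r (by rw [h, List.append_assoc])
      have hd : delta (u ++ t) = delta u + delta t := delta_append _ _
      have hle : delta t ≤ 0 := by linarith [h1.1, hd.le, hd.ge]
      by_contra hc
      push_neg at hc
      have ht0 : delta t = 0 := by omega
      have h2 := h1.2 (by rw [hd, ht0, add_zero])
      rw [List.length_append] at h2
      have : t.length = 0 := by omega
      exact ht (List.length_eq_zero_iff.mp this)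
    -- the key maximality property of `u.reverse` inside the reversed word
    have hmaxrev : ∀ p q : List Bool, u.reverse ++ v.reverse = p ++ q →
        delta p ≤ delta u ∧ (delta p = delta u → p.length ≤ u.length) := by
      intro p q hpq
      rcases List.append_eq_append_iff.mp hpq with ⟨a, ha1, ha2⟩ | ⟨c, hc1, hc2⟩
      · -- p = u.reverse ++ a, v.reverse = a ++ q
        have hv' : v = q.reverse ++ a.reverse := by
          rw [← List.reverse_reverse v, ha2, List.reverse_append]
        have hdp : delta p = delta u + delta a := by
          rw [ha1, delta_append, delta_reverse]
        have hdv : delta v = delta q + delta a := by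
          rw [hv', delta_append, delta_reverse, delta_reverse]
        have hsum : delta u + delta v = -1 := by
          rw [← delta_append, ← hw, hdw]
        by_cases hq : q = []
        · subst hq
          simp [delta_nil] at hdv
          constructor
          · linarith
          · intro hEq; exfalso; linarith
        · have hqrev : q.reverse ≠ [] := by simpa using hq
          have hdq : delta q ≤ -1 := by
            have := hprefix q.reverse a.reverse (by rw [hw, hv']) hqrev
            rwa [delta_reverse] at this
          by_cases ha : a = []
          · subst ha
            simp [delta_nil] at hdp
            constructor
            · exact hdp.le
            · intro _
              rw [ha1]
              simp
          · have harev : a.reverse ≠ [] := by simpa using ha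
            have h0 : 0 ≤ delta (u ++ q.reverse) := by
              apply hstrict (u ++ q.reverse) a.reverse _ harev
              rw [hw, hv', List.append_assoc]
            rw [delta_append, delta_reverse] at h0
            constructor
            · linarith
            · intro hEq; exfalso; linarith
      · -- u.reverse = p ++ c, q = c ++ v.reverse
        have hu' : u = c.reverse ++ p.reverse := by
          rw [← List.reverse_reverse u, hc1, List.reverse_append]
        have hdu : delta u = delta c + delta p := by
          rw [hu', delta_append, delta_reverse, delta_reverse]
        have hlen : p.length ≤ u.length := by
          have := congrArg List.length hc1
          simp [List.length_append] at this
          omega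
        refine ⟨?_, fun _ => hlen⟩
        by_cases hp : p = []
        · subst hp; simpa [delta_nil] using hM0
        · have hprev : p.reverse ++ v ≠ [] := by
            simp [hp]
          have h0 : 0 ≤ delta c.reverse := by
            apply hstrict c.reverse (p.reverse ++ v) _ hprev
            rw [hw, hu', List.append_assoc]
          rw [delta_reverse] at h0
          linarith
    constructor
    · -- inDn (m+1) (u.reverse ++ v.reverse)
      refine ⟨?_, ?_, ?_⟩
      · rw [countA_append, countA_reverse, countA_reverse, ← countA_append, ← hw, hA]; omega
      · rw [countB_append, countB_reverse, countB_reverse, ← countB_append, ← hw, hB]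
      · intro p q hpq hq
        rcases List.append_eq_append_iff.mp hpq with ⟨a, ha1, ha2⟩ | ⟨c, hc1, hc2⟩
        · have hv' : v = q.reverse ++ a.reverse := by
            rw [← List.reverse_reverse v, ha2, List.reverse_append]
          have hdp : delta p = delta u + delta a := by
            rw [ha1, delta_append, delta_reverse]
          have hdv : delta v = delta q + delta a := by
            rw [hv', delta_append, delta_reverse, delta_reverse]
          have hsum : delta u + delta v = -1 := by
            rw [← delta_append, ← hw, hdw]
          have hqrev : q.reverse ≠ [] := by simpa using hq
          have hdq : delta q ≤ -1 := by
            have := hprefix q.reverse a.reverse (by rw [hw, hv']) hqrev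
            rwa [delta_reverse] at this
          linarith
        · have hu' : u = c.reverse ++ p.reverse := by
            rw [← List.reverse_reverse u, hc1, List.reverse_append]
          have hdu : delta u = delta c + delta p := by
            rw [hu', delta_append, delta_reverse, delta_reverse]
          have hdc : delta c ≤ delta u := by
            have := (hmax c.reverse (p.reverse ++ v)
              (by rw [hw, hu', List.append_assoc])).1
            rwa [delta_reverse] at this
          linarith
    · -- involution
      intro u2 v2 heq hmax2
      have h1 := hmax2 u.reverse v.reverse rfl
      rw [delta_reverse] at h1
      have h2 := hmaxrev u2 v2 heq
      have hEq : delta u2 = delta u := le_antisymm h2.1 h1.1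
      have hl1 : u2.length ≤ u.length := h2.2 hEq
      have hl2 : u.length ≤ u2.length := by
        have := h1.2 hEq.symm
        simpa using this
      have hlen : u2.length = u.reverse.length := by simp; omega
      have hu2 : u2 = u.reverse := by
        have t1 : (u2 ++ v2).take u2.length = u2 := List.take_left
        rw [← heq, hlen, List.take_left] at t1
        exact t1.symm
      subst hu2
      have hv2 : v2 = v.reverse := by
        exact (List.append_cancel_left heq).symm
      subst hv2
      simp [hw]
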